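/- arXiv:2302.06069 — 5 statements merged into one kernel-verified Lean document; each statement's English description precedes it below -/
import Mathlib

section
/- Let β : G → G'' be a continuous surjective homomorphism of torsion-by-profinite topological abelian groups such that, for some choices of torsion-by-profinite presentations, the open profinite subgroup G''_pf of G'' is contained in β(G_pf). Then the induced map G/Ker(β) → G'' is an isomorphism of topological abelian groups, where G/Ker(β) carries the quotient topology. -/
open scoped Pointwise


/-- A torsion-by-profinite presentation of a topological abelian group `G`:
an open subgroup that is profinite (compact, Hausdorff, totally disconnected)
with torsion quotient. -/
def IsTorsionByProfinitePresentation {G : Type*} [AddCommGroup G] [TopologicalSpace G]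
    (H : AddSubgroup G) : Prop :=
  IsOpen (H : Set G) ∧ IsCompact (H : Set G) ∧ IsTotallyDisconnected (H : Set G) ∧
    ∀ x : G ⧸ H, ∃ n : ℕ, 0 < n ∧ n • x = 0

/-- Let `β : G → G''` be a continuous surjective homomorphism of
torsion-by-profinite topological abelian groups such that, for some torsion-by-profinite
presentations, the open profinite subgroup `H''` of `G''` is contained in `β(H)`.
Then the induced map `G ⧸ ker β → G''` is an isomorphism of topological abelian groups,
where `G ⧸ ker β` carries the quotient topology. -/
theorem quotient_iso_of_torsion_by_profinite
    {G G'' : Type*} [AddCommGroup G] [TopologicalSpace G] [IsTopologicalAddGroup G]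
    [AddCommGroup G''] [TopologicalSpace G''] [IsTopologicalAddGroup G'']
    [LocallyCompactSpace G] [T2Space G] [LocallyCompactSpace G''] [T2Space G'']
    (H : AddSubgroup G) (hH : IsTorsionByProfinitePresentation H)
    (H'' : AddSubgroup G'') (hH'' : IsTorsionByProfinitePresentation H'')
    (β : G →+ G'') (hβcont : Continuous β) (hβsurj : Function.Surjective β)
    (hsub : (H'' : Set G'') ⊆ β '' (H : Set G)) :
    ∃ e : (G ⧸ β.ker) ≃+ G'', Continuous e ∧ Continuous e.symm ∧
      ∀ x : G, e (QuotientAddGroup.mk x) = β x := by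
  classical
  -- the kernel is closed
  have hker_closed : IsClosed ((β.ker : Set G)) := by
    have h : (β.ker : Set G) = β ⁻¹' {0} := rfl
    rw [h]; exact isClosed_singleton.preimage hβcont
  -- key step: the image of an open neighbourhood of 0 is a neighbourhood of 0
  have key : ∀ W : Set G, IsOpen W → (0 : G) ∈ W → β '' W ∈ nhds (0 : G'') := by
    intro W hW hW0
    set C : Set G := (H : Set G) ∩ (W + (β.ker : Set G))ᶜ with hCdef
    have hWk_open : IsOpen (W + (β.ker : Set G)) := hW.add_right
    have hCcomp : IsCompact C := hH.2.1.inter_right (isClosed_compl_iff.mpr hWk_open)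
    have hβC_comp : IsCompact (β '' C) := hCcomp.image hβcont
    have hβC_closed : IsClosed (β '' C) := hβC_comp.isClosed
    have h0C : (0 : G'') ∉ β '' C := by
      rintro ⟨c, ⟨hcH, hcW⟩, hc0⟩
      exact hcW ⟨0, hW0, c, by simpa [AddMonoidHom.mem_ker] using hc0, by simp⟩
    have hsubW : (H'' : Set G'') ∩ (β '' C)ᶜ ⊆ β '' W := by
      rintro y ⟨hyH'', hyC⟩
      obtain ⟨x, hxH, rfl⟩ := hsub hyH''
      have hxnotC : x ∉ C := fun hx => hyC ⟨x, hx, rfl⟩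
      have hxmem : x ∈ W + (β.ker : Set G) := by
        by_contra hx
        exact hxnotC ⟨hxH, hx⟩
      obtain ⟨w, hw, k, hk, rfl⟩ := hxmem
      have hβk : β k = 0 := AddMonoidHom.mem_ker.mp hk
      have hwk : β (w + k) = β w := by rw [map_add, hβk, add_zero]
      exact ⟨w, hw, hwk.symm⟩
    refine Filter.mem_of_superset ?_ hsubW
    refine IsOpen.mem_nhds (hH''.1.inter hβC_closed.isOpen_compl) ⟨H''.zero_mem, h0C⟩
  -- hence β is an open map
  have hopen : IsOpenMap β := by
    intro U hU
    rw [isOpen_iff_mem_nhds]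
    rintro y ⟨u, hu, rfl⟩
    have hW : IsOpen ((fun x => -u + x) '' U) := (Homeomorph.addLeft (-u)).isOpenMap U hU
    have hW0 : (0 : G) ∈ (fun x => -u + x) '' U := ⟨u, hu, by simp⟩
    have hmem : β '' ((fun x => -u + x) '' U) ∈ nhds (0 : G'') := key _ hW hW0
    have hmem2 : (fun z => β u + z) '' (β '' ((fun x => -u + x) '' U)) ∈ nhds (β u) := by
      have := (Homeomorph.addLeft (β u)).isOpenMap.image_mem_nhds hmem
      simpa using this
    have himg : (fun z => β u + z) '' (β '' ((fun x => -u + x) '' U)) = β '' U := by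
      rw [Set.image_image, Set.image_image]
      refine Set.image_congr' (fun x => ?_)
      simp [map_add, map_neg, add_neg_cancel_left]
    rwa [himg] at hmem2
  -- the induced isomorphism
  refine ⟨QuotientAddGroup.quotientKerEquivOfSurjective β hβsurj, ?_, ?_, fun x => rfl⟩
  · refine (QuotientAddGroup.isQuotientMap_mk β.ker).continuous_iff.mpr ?_
    have h : (⇑(QuotientAddGroup.quotientKerEquivOfSurjective β hβsurj) ∘
        QuotientAddGroup.mk) = ⇑β := funext fun x => rfl
    rw [h]; exact hβcont
  · set e := QuotientAddGroup.quotientKerEquivOfSurjective β hβsurj with hedef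
    have hecont : Continuous e := by
      refine (QuotientAddGroup.isQuotientMap_mk β.ker).continuous_iff.mpr ?_
      have h : (⇑e ∘ QuotientAddGroup.mk) = ⇑β := funext fun x => rfl
      rw [h]; exact hβcont
    have heopen : IsOpenMap e := by
      intro U hU
      have himg : ⇑e '' U = β '' (QuotientAddGroup.mk ⁻¹' U) := by
        ext y
        constructor
        · rintro ⟨q, hq, rfl⟩
          obtain ⟨x, rfl⟩ := QuotientAddGroup.mk_surjective q
          exact ⟨x, hq, rfl⟩
        · rintro ⟨x, hx, rfl⟩
          exact ⟨_, hx, rfl⟩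
      rw [himg]
      exact hopen _ (hU.preimage (QuotientAddGroup.isQuotientMap_mk β.ker).continuous)
    exact (Equiv.toHomeomorphOfContinuousOpen e.toEquiv hecont heopen).symm.continuous
end

section
/- Let 0 → G' → G → G'' → 0 be a short exact sequence of torsion-by-profinite topological abelian groups (with continuous maps, G' having the subspace topology and G'' the quotient topology), such that G''_pf ⊆ β(G_pf) for some torsion-by-profinite presentations. Then the induced sequence of continuous-character groups 0 → Hom_cont(G'', ℚ/ℤ) → Hom_cont(G, ℚ/ℤ) → Hom_cont(G', ℚ/ℤ) → 0 is exact, where ℚ/ℤ has the discrete topology. -/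
/-- The group `ℚ/ℤ`, regarded with the discrete topology (so that a homomorphism
`G →+ QZ` is continuous if and only if its kernel is open in `G`). -/
abbrev QZ : Type := ℚ ⧸ AddSubgroup.zmultiples (1 : ℚ)

/-- Let `0 → G' → G → G'' → 0` be a short exact sequence of
torsion-by-profinite topological abelian groups with `G''_pf ⊆ β(G_pf)` for suitable
presentations.  Then the induced sequence of continuous-character groups
`0 → (G'')^⋆ → G^⋆ → (G')^⋆ → 0` is exact, where a character `χ : ? →+ ℚ/ℤ` is
continuous (for the discrete topology on `ℚ/ℤ`) precisely when its kernel is open. -/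
theorem dual_sequence_exact
    {G' G G'' : Type*}
    [AddCommGroup G'] [TopologicalSpace G'] [IsTopologicalAddGroup G']
    [AddCommGroup G] [TopologicalSpace G] [IsTopologicalAddGroup G]
    [AddCommGroup G''] [TopologicalSpace G''] [IsTopologicalAddGroup G'']
    [LocallyCompactSpace G'] [T2Space G'] [LocallyCompactSpace G] [T2Space G]
    [LocallyCompactSpace G''] [T2Space G'']
    (H' : AddSubgroup G') (hH' : IsTorsionByProfinitePresentation H')
    (H : AddSubgroup G) (hH : IsTorsionByProfinitePresentation H)
    (H'' : AddSubgroup G'') (hH'' : IsTorsionByProfinitePresentation H'')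
    (α : G' →+ G) (β : G →+ G'')
    (hαcont : Continuous α) (hβcont : Continuous β)
    (hαemb : Topology.IsEmbedding α) (hβquot : Topology.IsQuotientMap β)
    (hαinj : Function.Injective α) (hβsurj : Function.Surjective β)
    (hexact : β.ker = α.range)
    (hsub : (H'' : Set G'') ⊆ β '' (H : Set G)) :
    -- exactness of 0 → (G'')^⋆ → G^⋆ → (G')^⋆ → 0
    (∀ χ'' : G'' →+ QZ, IsOpen ((χ''.ker : AddSubgroup G'') : Set G'') →
        χ''.comp β = 0 → χ'' = 0) ∧
    (∀ χ : G →+ QZ, IsOpen ((χ.ker : AddSubgroup G) : Set G) →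
        (χ.comp α = 0 ↔ ∃ χ'' : G'' →+ QZ,
          IsOpen ((χ''.ker : AddSubgroup G'') : Set G'') ∧ χ''.comp β = χ)) ∧
    (∀ χ' : G' →+ QZ, IsOpen ((χ'.ker : AddSubgroup G') : Set G') →
        ∃ χ : G →+ QZ, IsOpen ((χ.ker : AddSubgroup G) : Set G) ∧ χ.comp α = χ') := by

  classical
  obtain ⟨hHopen, hHcomp, hHtd, -⟩ := hH
  constructor
  · -- injectivity of (G'')^⋆ → G^⋆
    intro χ'' _ h0
    ext x''
    obtain ⟨x, rfl⟩ := hβsurj x''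
    exact DFunLike.congr_fun h0 x
  constructor
  · -- exactness in the middle
    intro χ hχopen
    constructor
    · intro hχα
      -- χ vanishes on ker β
      have hker : ∀ x ∈ β.ker, χ x = 0 := by
        intro x hx
        rw [hexact] at hx
        obtain ⟨y, rfl⟩ := hx
        exact DFunLike.congr_fun hχα y
      set e := QuotientAddGroup.quotientKerEquivOfSurjective β hβsurj with he
      set χ'' : G'' →+ QZ :=
        (QuotientAddGroup.lift β.ker χ hker).comp e.symm.toAddMonoidHom with hχ''
      have hcomp : ∀ x : G, χ'' (β x) = χ x := by
        intro x
        have h1 : e.symm (β x) = QuotientAddGroup.mk x := by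
          apply e.injective
          simp only [AddEquiv.apply_symm_apply]
          simp [e, QuotientAddGroup.quotientKerEquivOfSurjective,
            QuotientAddGroup.quotientKerEquivRange]
        simp [χ'', h1]
        rfl
      refine ⟨χ'', ?_, ?_⟩
      · have hpre : β ⁻¹' (χ''.ker : Set G'') = (χ.ker : Set G) := by
          ext x
          simp [AddMonoidHom.mem_ker, hcomp x]
        exact hβquot.isOpen_preimage.mp (by rw [hpre]; exact hχopen)
      · ext x; exact hcomp x
    · rintro ⟨χ'', -, rfl⟩
      ext y
      have : β (α y) = 0 := by
        have : α y ∈ β.ker := by rw [hexact]; exact ⟨y, rfl⟩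
        exact this
      simp [this]
  · -- surjectivity onto (G')^⋆
    intro χ' hχ'open
    -- find an open set O₀ of G pulling back to ker χ'
    obtain ⟨O₀, hO₀open, hO₀pre⟩ :=
      hαemb.toIsInducing.isOpen_iff.mp hχ'open
    have himg : α '' (χ'.ker : Set G') = (α.range : Set G) ∩ O₀ := by
      ext a
      constructor
      · rintro ⟨x, hx, rfl⟩
        refine ⟨⟨x, rfl⟩, ?_⟩
        rw [← hO₀pre] at hx
        exact hx
      · rintro ⟨⟨x, rfl⟩, ha⟩
        refine ⟨x, ?_, rfl⟩
        rw [← hO₀pre]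
        exact ha
    -- H as a profinite topological group
    haveI : CompactSpace H := isCompact_iff_compactSpace.mp hHcomp
    haveI : TotallyDisconnectedSpace H := totallyDisconnectedSpace_subtype_iff.mpr hHtd
    have h0O₀ : (0 : G) ∈ O₀ := by
      have h : (0 : G') ∈ ⇑α ⁻¹' O₀ := by
        rw [hO₀pre]; exact χ'.ker.zero_mem
      simpa using h
    have hW : IsOpen ((Subtype.val : H → G) ⁻¹' O₀) :=
      hO₀open.preimage continuous_subtype_val
    have h0W : (0 : H) ∈ (Subtype.val : H → G) ⁻¹' O₀ := h0O₀
    obtain ⟨C, hCclopen, h0C, hCsub⟩ := compact_exists_isClopen_in_isOpen hW h0W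
    obtain ⟨S, hS⟩ :=
      IsTopologicalAddGroup.exist_openAddSubgroup_sub_clopen_nhds_of_zero hCclopen h0C
    -- V : open subgroup of G contained in H with V ∩ O₀-condition
    set V : AddSubgroup G := S.toAddSubgroup.map H.subtype with hV
    have hVopen : IsOpen (V : Set G) := by
      have : (V : Set G) = (Subtype.val : H → G) '' (S : Set H) := by
        ext x; simp [V, AddSubgroup.mem_map]
      rw [this]
      exact hHopen.isOpenEmbedding_subtypeVal.isOpenMap _ S.isOpen
    have hVO₀ : (V : Set G) ⊆ O₀ := by
      rintro x hx
      obtain ⟨s, hs, rfl⟩ := hx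
      exact hCsub (hS hs)
    -- key: α⁻¹(V) ⊆ ker χ'
    have hkey : ∀ y : G', α y ∈ V → y ∈ χ'.ker := by
      intro y hy
      have : α y ∈ (α.range : Set G) ∩ O₀ := ⟨⟨y, rfl⟩, hVO₀ hy⟩
      rw [← himg] at this
      obtain ⟨z, hz, hzy⟩ := this
      rwa [← hαinj hzy]
    -- build χ via the quotient G ⧸ V
    set π : G →+ G ⧸ V := QuotientAddGroup.mk' V with hπ
    set φ₀ : G' →+ G ⧸ V := π.comp α with hφ₀
    have hker : φ₀.ker ≤ χ'.ker := by
      intro y hy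
      have : α y ∈ V := by
        have := hy
        rw [AddMonoidHom.mem_ker] at this
        simpa [φ₀, π, QuotientAddGroup.eq_zero_iff] using this
      exact hkey y this
    set ψ : G' ⧸ φ₀.ker →+ QZ := QuotientAddGroup.lift φ₀.ker χ' hker with hψ
    set eq₁ := QuotientAddGroup.quotientKerEquivRange φ₀ with heq₁
    set φ : φ₀.range →+ QZ := ψ.comp eq₁.symm.toAddMonoidHom with hφ
    obtain ⟨χQ, hχQ⟩ :=
      (Module.Baer.of_divisible (AddCircle (1:ℚ))).extension_property_addMonoidHom
        φ₀.range.subtype Subtype.val_injective φ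
    refine ⟨χQ.comp π, ?_, ?_⟩
    · -- open kernel: contains V
      refine AddSubgroup.isOpen_mono (H₁ := V) ?_ hVopen
      intro v hv
      have : π v = 0 := by simpa [π, QuotientAddGroup.eq_zero_iff] using hv
      simp [AddMonoidHom.mem_ker, this]
    · -- χ ∘ α = χ'
      ext y
      have hmem : φ₀ y ∈ φ₀.range := ⟨y, rfl⟩
      have h1 : χQ (π (α y)) = χQ (φ₀.range.subtype ⟨φ₀ y, hmem⟩) := rfl
      have h2 : χQ (φ₀.range.subtype ⟨φ₀ y, hmem⟩) = φ ⟨φ₀ y, hmem⟩ :=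
        DFunLike.congr_fun hχQ _
      have h3 : eq₁.symm ⟨φ₀ y, hmem⟩ = QuotientAddGroup.mk y := by
        apply eq₁.injective
        simp only [AddEquiv.apply_symm_apply]
        exact Subtype.ext rfl
      have h4 : φ ⟨φ₀ y, hmem⟩ = χ' y := by
        show ψ (eq₁.symm ⟨φ₀ y, hmem⟩) = χ' y
        rw [h3]
        simp [ψ]
      simp only [AddMonoidHom.comp_apply]
      rw [h1, h2, h4]
end

section
/- Let {G_i}_{i ∈ I} be an inverse system of topological abelian groups over a cofiltered index set I, where each G_i has a topology generated by open subgroups (i.e., admits a fundamental system of neighborhoods of the identity consisting of open subgroups). Let G = lim_i G_i with the inverse limit topology. Then the canonical map colim_i Hom_cont(G_i, ℚ/ℤ) → Hom_cont(G, ℚ/ℤ) is surjective. If moreover each projection π_i : G → G_i is surjective, this map is bijective. -/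
lemma extend_char {A : Type*} [AddCommGroup A] (H : AddSubgroup A) (ψ : H →+ QZ) :
    ∃ χ : A →+ QZ, χ.comp H.subtype = ψ := by
  obtain ⟨χ, hχ⟩ := CharacterModule.dual_surjective_of_injective (R := ℤ)
    H.subtype.toIntLinearMap Subtype.val_injective ψ
  exact ⟨χ, hχ⟩

/-- Let `{G i}` be an inverse system of topological abelian groups over a
cofiltered (codirected, nonempty) index set, each `G i` having a fundamental system of
neighborhoods of `0` consisting of open subgroups, with continuous transition maps
`f i j : G j →+ G i` for `i ≤ j`.  Let `L` be its inverse limit with the inverse limit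
topology (encoded: `L` embeds topologically into `∏ i, G i` with image the compatible
families, via the projections `π i`).  Then every continuous character `L →+ ℚ/ℤ`
factors through some `π i` (surjectivity of `colim (G i)^⋆ → L^⋆`); and if all `π i`
are surjective this factorization is essentially unique (bijectivity). -/
theorem dual_of_inverse_limit_surjective
    {I : Type*} [Preorder I] [Nonempty I] [IsDirected I (· ≤ ·)]
    (G : I → Type*) [∀ i, AddCommGroup (G i)] [∀ i, TopologicalSpace (G i)]
    [∀ i, IsTopologicalAddGroup (G i)]
    (hbasis : ∀ i, (nhds (0 : G i)).HasBasis
      (fun U : AddSubgroup (G i) => IsOpen (U : Set (G i)))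
      (fun U : AddSubgroup (G i) => (U : Set (G i))))
    (f : ∀ i j, i ≤ j → G j →+ G i)
    (hfcont : ∀ i j (h : i ≤ j), Continuous (f i j h))
    (hfid : ∀ i, f i i le_rfl = AddMonoidHom.id (G i))
    (hfcomp : ∀ i j k (hij : i ≤ j) (hjk : j ≤ k),
      (f i j hij).comp (f j k hjk) = f i k (hij.trans hjk))
    {L : Type*} [AddCommGroup L] [TopologicalSpace L] [IsTopologicalAddGroup L]
    (π : ∀ i, L →+ G i)
    (hπcompat : ∀ i j (h : i ≤ j), (f i j h).comp (π j) = π i)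
    (hemb : Topology.IsEmbedding (fun x : L => fun i => π i x))
    (hrange : Set.range (fun x : L => fun i => π i x) =
      {g : ∀ i, G i | ∀ i j (h : i ≤ j), f i j h (g j) = g i}) :
    (∀ χ : L →+ QZ, IsOpen ((χ.ker : AddSubgroup L) : Set L) →
      ∃ (i : I) (χi : G i →+ QZ),
        IsOpen ((χi.ker : AddSubgroup (G i)) : Set (G i)) ∧ χi.comp (π i) = χ) ∧
    ((∀ i, Function.Surjective (π i)) →
      ∀ (i j : I) (χi : G i →+ QZ) (χj : G j →+ QZ),
        IsOpen ((χi.ker : AddSubgroup (G i)) : Set (G i)) →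
        IsOpen ((χj.ker : AddSubgroup (G j)) : Set (G j)) →
        χi.comp (π i) = χj.comp (π j) →
        ∃ (k : I) (hik : i ≤ k) (hjk : j ≤ k),
          χi.comp (f i k hik) = χj.comp (f j k hjk)) := by
  classical
  constructor
  · intro χ hopen
    set e : L → ∀ i, G i := fun x => fun i => π i x with he
    -- the kernel is the preimage of an open set of the product
    obtain ⟨W, hWopen, hWpre⟩ := hemb.isInducing.isOpen_iff.1 hopen
    have h0W : (0 : ∀ i, G i) ∈ W := by
      have h0 : (0 : L) ∈ (χ.ker : Set L) := χ.ker.zero_mem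
      rw [← hWpre] at h0
      have : e 0 = 0 := by funext i; simp [he]
      rwa [Set.mem_preimage, this] at h0
    have hWn : W ∈ nhds (0 : ∀ i, G i) := hWopen.mem_nhds h0W
    rw [nhds_pi] at hWn
    obtain ⟨S, hSfin, V, hV, hsub⟩ := Filter.mem_pi.1 hWn
    choose U hUopen hUsub using fun i => (hbasis i).mem_iff.1 (hV i)
    obtain ⟨k, hk⟩ := hSfin.toFinset.exists_le
    have hle : ∀ i ∈ S, i ≤ k := fun i hi => hk i (hSfin.mem_toFinset.2 hi)
    set Wk : I → AddSubgroup (G k) :=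
      fun i => if h : i ≤ k then (U i).comap (f i k h) else ⊤ with hWk
    set Uk : AddSubgroup (G k) := hSfin.toFinset.inf Wk with hUkdef
    have hWkopen : ∀ i, IsOpen ((Wk i : Set (G k))) := by
      intro i
      by_cases h : i ≤ k
      · rw [hWk]
        simp only [dif_pos h, AddSubgroup.coe_comap]
        exact (hUopen i).preimage (hfcont i k h)
      · rw [hWk]; simp only [dif_neg h]; exact isOpen_univ
    have hUkcoe : (Uk : Set (G k)) = ⋂ i ∈ hSfin.toFinset, ↑(Wk i) := by
      rw [hUkdef, Finset.inf_eq_iInf]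
      simp [AddSubgroup.coe_iInf]
    have hUkopen : IsOpen (Uk : Set (G k)) := by
      rw [hUkcoe]
      exact isOpen_biInter_finset fun i _ => hWkopen i
    -- key: π k x ∈ Uk → χ x = 0
    have key : ∀ x : L, π k x ∈ Uk → χ x = 0 := by
      intro x hx
      have hxW : e x ∈ W := by
        apply hsub
        rw [Set.mem_pi]
        intro i hiS
        have hik := hle i hiS
        have hWi : π k x ∈ Wk i := by
          have : Uk ≤ Wk i := Finset.inf_le (hSfin.mem_toFinset.2 hiS)
          exact this hx
        rw [hWk] at hWi
        simp only [dif_pos hik, AddSubgroup.mem_comap] at hWi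
        have hfe : f i k hik (π k x) = π i x := DFunLike.congr_fun (hπcompat i k hik) x
        rw [hfe] at hWi
        exact hUsub i hWi
      have : x ∈ (χ.ker : Set L) := by rw [← hWpre]; exact hxW
      exact this
    -- the homomorphism onto Uk ⊔ range (π k)
    set φ : L × ↥Uk →+ G k :=
      ((π k).comp (AddMonoidHom.fst L ↥Uk)) + (Uk.subtype.comp (AddMonoidHom.snd L ↥Uk)) with hφ
    have hφapp : ∀ z : L × ↥Uk, φ z = π k z.1 + (z.2 : G k) := fun z => rfl
    have hcond : ∀ z ∈ φ.ker, (χ.comp (AddMonoidHom.fst L ↥Uk)) z = 0 := by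
      intro z hz
      rw [AddMonoidHom.mem_ker, hφapp] at hz
      have : π k z.1 = -(z.2 : G k) := by linear_combination (norm := abel) hz
      have hmem : π k z.1 ∈ Uk := this ▸ Uk.neg_mem z.2.2
      simpa using key z.1 hmem
    set eqv := QuotientAddGroup.quotientKerEquivRange φ with heqv
    set ψ0 : φ.range →+ QZ :=
      (QuotientAddGroup.lift φ.ker (χ.comp (AddMonoidHom.fst L ↥Uk)) hcond).comp
        eqv.symm.toAddMonoidHom with hψ0
    have hψ0app : ∀ z : L × ↥Uk, ψ0 ⟨φ z, ⟨z, rfl⟩⟩ = χ z.1 := by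
      intro z
      have hsymm : eqv.symm ⟨φ z, ⟨z, rfl⟩⟩ = QuotientAddGroup.mk z := by
        apply eqv.injective
        rw [AddEquiv.apply_symm_apply]
        rfl
      rw [hψ0]
      simp only [AddMonoidHom.comp_apply, AddEquiv.coe_toAddMonoidHom, hsymm]
      rfl
    obtain ⟨χk, hχk⟩ := extend_char φ.range ψ0
    have hχkφ : ∀ z : L × ↥Uk, χk (φ z) = χ z.1 := by
      intro z
      have := DFunLike.congr_fun hχk ⟨φ z, ⟨z, rfl⟩⟩
      simpa [hψ0app z] using this
    refine ⟨k, χk, ?_, ?_⟩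
    · -- kernel of χk is open: it contains Uk
      have hUkker : Uk ≤ χk.ker := by
        intro u hu
        rw [AddMonoidHom.mem_ker]
        have := hχkφ (0, ⟨u, hu⟩)
        simpa [hφapp] using this
      exact AddSubgroup.isOpen_mono hUkker hUkopen
    · ext x
      have := hχkφ (x, 0)
      simpa [hφapp] using this
  · intro hsurj i j χi χj _ _ hij
    obtain ⟨k, hik, hjk⟩ := exists_ge_ge i j
    refine ⟨k, hik, hjk, ?_⟩
    ext g
    obtain ⟨x, rfl⟩ := hsurj k g
    have h1 : f i k hik (π k x) = π i x := DFunLike.congr_fun (hπcompat i k hik) x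
    have h2 : f j k hjk (π k x) = π j x := DFunLike.congr_fun (hπcompat j k hjk) x
    have h3 : χi (π i x) = χj (π j x) := DFunLike.congr_fun hij x
    simp [h1, h2, h3]
end

section
/- Let J be a profinite abelian group. Then the Tate module of J vanishes: lim_n (n-torsion of J) = 0, where the inverse limit is over positive integers n ordered by divisibility, with transition maps given by multiplication (from mn-torsion to n-torsion, x ↦ m·x). -/
/-- The Tate module of a profinite abelian group `J` vanishes: every
compatible family `(x_n)_{n ≥ 1}` with `x_n ∈ J[n]` and `m • x_{m n} = x_n` (the inverse
limit over `ℕ` ordered by divisibility, transition maps given by multiplication) is zero. -/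
theorem tate_module_of_profinite_eq_zero
    {J : Type*} [AddCommGroup J] [TopologicalSpace J] [IsTopologicalAddGroup J]
    [CompactSpace J] [T2Space J] [TotallyDisconnectedSpace J]
    (x : ℕ+ → J)
    (htor : ∀ n : ℕ+, (n : ℕ) • x n = 0)
    (hcompat : ∀ m n : ℕ+, (m : ℕ) • x (m * n) = x n) :
    ∀ n : ℕ+, x n = 0 := by
  intro n
  by_contra hne
  have : TotallySeparatedSpace J := loc_compact_t2_tot_disc_iff_tot_sep.mp ‹_›
  obtain ⟨W, hW, h0W, hxW⟩ :=
    exists_isClopen_of_totally_separated (i := (0 : J)) (j := x n) (Ne.symm hne)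
  obtain ⟨H, hH⟩ :=
    IsTopologicalAddGroup.exist_openAddSubgroup_sub_clopen_nhds_of_zero hW h0W
  have hfin : Finite (J ⧸ H.toAddSubgroup) :=
    AddSubgroup.quotient_finite_of_isOpen H.toAddSubgroup H.isOpen
  set c : ℕ := Nat.card (J ⧸ H.toAddSubgroup) with hc
  have hcpos : 0 < c := Nat.card_pos
  have hmem : x n ∈ H.toAddSubgroup := by
    have := hcompat ⟨c, hcpos⟩ n
    rw [← this]
    have : ((c • x (⟨c, hcpos⟩ * n) : J) : J ⧸ H.toAddSubgroup) = 0 := by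
      rw [QuotientAddGroup.mk_nsmul]
      exact card_nsmul_eq_zero'
    exact (QuotientAddGroup.eq_zero_iff _).mp this
  exact hxW (hH hmem)
end

section
/- Let 0 → F → P → Q → 0 be an exact sequence of topological abelian groups where the map P → Q is a topological quotient map, Q is profinite, and χ : P → ℝ/ℤ is a continuous homomorphism such that χ(F) is finite of exponent m. Then the homomorphism m·χ factors through a continuous homomorphism Q → ℝ/ℤ, and consequently χ(P) is finite. -/
lemma aux_small (y : AddCircle (1:ℝ)) (h : ∀ n : ℕ, ‖n • y‖ < 1/3) : y = 0 := by
  haveI : Fact ((0:ℝ) < 1) := ⟨one_pos⟩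
  by_contra hy
  set t : ℝ := (AddCircle.equivIco 1 (-(1/2)) y : ℝ) with ht
  have hmem := (AddCircle.equivIco 1 (-(1/2)) y).2
  have hcoe : ((t : ℝ) : AddCircle (1:ℝ)) = y := (AddCircle.equivIco 1 (-(1/2))).symm_apply_apply y
  have htne : t ≠ 0 := by
    intro h0
    apply hy
    rw [← hcoe, h0]
    norm_num
  have habs : |t| ≤ 1/2 := by
    rw [abs_le]
    exact ⟨hmem.1, by linarith [hmem.2]⟩
  have hnorm : ‖y‖ = |t| := by
    rw [← hcoe, AddCircle.norm_coe_eq_abs_iff 1 one_ne_zero]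
    simpa using habs
  have htpos : 0 < |t| := abs_pos.mpr htne
  have hlt : |t| < 1/3 := by
    have := h 1
    simpa [hnorm] using this
  set n : ℕ := ⌈(1/3) / |t|⌉₊ with hn
  have hn1 : (1:ℝ)/3 ≤ n * |t| := by
    rw [← div_le_iff₀ htpos]
    exact Nat.le_ceil _
  have hn2 : (n:ℝ) * |t| < 2/3 := by
    have : (n : ℝ) < (1/3)/|t| + 1 := Nat.ceil_lt_add_one (by positivity)
    have := mul_lt_mul_of_pos_right this htpos
    rw [add_mul, div_mul_cancel₀ _ htpos.ne', one_mul] at this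
    linarith
  have hkey : (1:ℝ)/3 ≤ ‖(↑((n:ℝ) * |t|) : AddCircle (1:ℝ))‖ := by
    rw [show ((↑((n:ℝ) * |t|) : AddCircle (1:ℝ))) = ((n * |t| : ℝ) : UnitAddCircle) from rfl,
      UnitAddCircle.norm_eq]
    rcases le_or_gt (round ((n:ℝ) * |t|)) 0 with hr | hr
    · have : (round ((n:ℝ) * |t|) : ℝ) ≤ 0 := by exact_mod_cast hr
      rw [abs_of_nonneg (by linarith)]
      linarith
    · have : (1:ℝ) ≤ (round ((n:ℝ) * |t|) : ℝ) := by exact_mod_cast hr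
      rw [abs_of_nonpos (by linarith)]
      linarith
  have hns : ((↑((n:ℝ) * |t|)) : AddCircle (1:ℝ)) = n • (↑|t| : AddCircle (1:ℝ)) := by
    rw [← AddCircle.coe_nsmul]
    norm_num [nsmul_eq_mul]
  have hnormy : ‖n • y‖ = ‖(↑((n:ℝ)*|t|) : AddCircle (1:ℝ))‖ := by
    rcases abs_choice t with h1 | h1
    · rw [hns, h1, hcoe]
    · rw [hns, h1, AddCircle.coe_neg, hcoe, smul_neg, norm_neg]
  have := h n
  rw [hnormy] at this
  linarith

lemma aux_ker (m : ℕ) (hm : 0 < m) : {y : AddCircle (1:ℝ) | m • y = 0}.Finite := by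
  haveI : Fact ((0:ℝ) < 1) := ⟨one_pos⟩
  have hsub : {y : AddCircle (1:ℝ) | m • y = 0} ⊆
      ⋃ n ∈ Finset.Icc 1 m, {u : AddCircle (1:ℝ) | addOrderOf u = n} := by
    intro y hy
    have hfin : IsOfFinAddOrder y := isOfFinAddOrder_iff_nsmul_eq_zero.mpr ⟨m, hm, hy⟩
    have hdvd : addOrderOf y ∣ m := addOrderOf_dvd_of_nsmul_eq_zero hy
    have h1 : 1 ≤ addOrderOf y := hfin.addOrderOf_pos
    have h2 : addOrderOf y ≤ m := Nat.le_of_dvd hm hdvd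
    exact Set.mem_biUnion (Finset.mem_Icc.mpr ⟨h1, h2⟩) rfl
  refine Set.Finite.subset (Set.Finite.biUnion (Finset.finite_toSet _) fun n hn => ?_) hsub
  simp only [Finset.coe_Icc, Set.mem_Icc] at hn
  exact AddCircle.finite_setOfPred_addOrderOf_eq 1 hn.1

lemma aux_preimage (m : ℕ) (hm : 0 < m) {S : Set (AddCircle (1:ℝ))} (hS : S.Finite) :
    ((fun y => m • y) ⁻¹' S).Finite := by
  have hK := aux_ker m hm
  have hsub : (fun y => m • y) ⁻¹' S ⊆ ⋃ s ∈ S, (fun y : AddCircle (1:ℝ) => m • y) ⁻¹' {s} :=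
    fun x hx => Set.mem_biUnion hx rfl
  refine Set.Finite.subset (hS.biUnion fun s hs => ?_) hsub
  rcases Set.eq_empty_or_nonempty ((fun y : AddCircle (1:ℝ) => m • y) ⁻¹' {s}) with he | ⟨x0, hx0⟩
  · simp [he]
  · refine (hK.image (fun k => x0 + k)).subset ?_
    intro x hx
    simp only [Set.mem_preimage, Set.mem_singleton_iff] at hx hx0
    refine ⟨x - x0, ?_, by show x0 + (x - x0) = x; abel⟩
    simp only [Set.mem_setOf_eq, smul_sub, hx, hx0, sub_self]

/-- Let `0 → F → P → Q → 0` be an exact sequence of topological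
abelian groups where `g : P → Q` is a topological quotient map and `Q` is profinite
(compact, Hausdorff, totally disconnected).  Let `χ : P → ℝ/ℤ` be a continuous
homomorphism such that `χ(F)` is finite of exponent `m > 0`.  Then `m·χ` factors
through a continuous homomorphism `Q → ℝ/ℤ`, and consequently `χ(P)` is finite. -/
theorem character_factors_and_finite_image
    {P Q : Type*} [AddCommGroup P] [TopologicalSpace P] [IsTopologicalAddGroup P]
    [AddCommGroup Q] [TopologicalSpace Q] [IsTopologicalAddGroup Q]
    [CompactSpace Q] [T2Space Q] [TotallyDisconnectedSpace Q]
    (F : AddSubgroup P) (g : P →+ Q)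
    (hg_surj : Function.Surjective g) (hker : g.ker = F)
    (hg_quot : Topology.IsQuotientMap g)
    (χ : P →+ AddCircle (1 : ℝ)) (hχ : Continuous χ)
    (m : ℕ) (hm : 0 < m)
    (hFfin : (χ '' (F : Set P)).Finite)
    (hFexp : ∀ x ∈ F, m • χ x = 0) :
    (∃ ψ : Q →+ AddCircle (1 : ℝ), Continuous ψ ∧ ∀ x : P, ψ (g x) = m • χ x) ∧
    (Set.range χ).Finite := by
  haveI : Fact ((0:ℝ) < 1) := ⟨one_pos⟩
  have key : ∀ x y : P, g x = g y → m • χ x = m • χ y := by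
    intro x y h
    have hxy : x - y ∈ F := by
      rw [← hker]
      simp [AddMonoidHom.mem_ker, map_sub, h]
    have := hFexp _ hxy
    rw [map_sub, smul_sub, sub_eq_zero] at this
    exact this
  set s := Function.surjInv hg_surj with hs
  have hgs : ∀ q, g (s q) = q := fun q => Function.surjInv_eq hg_surj q
  let ψ : Q →+ AddCircle (1:ℝ) :=
    { toFun := fun q => m • χ (s q)
      map_zero' := by
        have : m • χ (s 0) = m • χ 0 := key _ _ (by rw [hgs]; simp)
        simpa using this
      map_add' := fun a b => by
        show m • χ (s (a + b)) = m • χ (s a) + m • χ (s b)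
        have : m • χ (s (a + b)) = m • χ (s a + s b) := key _ _ (by simp [hgs])
        rw [this, map_add, smul_add] }
  have hfac : ∀ x : P, ψ (g x) = m • χ x := fun x => key _ _ (hgs _)
  have hcont' : Continuous fun x : P => m • χ x := by fun_prop
  have hψc : Continuous ψ := by
    rw [hg_quot.continuous_iff]
    have heq : (⇑ψ ∘ ⇑g) = fun x => m • χ x := funext hfac
    rw [heq]
    exact hcont'
  -- find an open subgroup mapped to 0
  have h0mem : (0 : Q) ∈ ⇑ψ ⁻¹' Metric.ball 0 (1/3) := by
    simp only [Set.mem_preimage, map_zero, Metric.mem_ball, dist_self]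
    norm_num
  obtain ⟨W, hWclopen, hW0, hWsub⟩ :=
    compact_exists_isClopen_in_isOpen (Metric.isOpen_ball.preimage hψc) h0mem
  obtain ⟨H, hH⟩ :=
    IsTopologicalAddGroup.exist_openAddSubgroup_sub_clopen_nhds_of_zero hWclopen hW0
  have hHker : ∀ q ∈ H, ψ q = 0 := by
    intro q hq
    apply aux_small
    intro n
    have hmemH : n • q ∈ H := AddSubgroup.nsmul_mem H.toAddSubgroup hq n
    have h2 := hWsub (hH hmemH)
    simp only [Set.mem_preimage, Metric.mem_ball, dist_zero_right, map_nsmul] at h2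
    exact h2
  have hψrange : (Set.range ψ).Finite := by
    have hle : H.toAddSubgroup ≤ ψ.ker := fun q hq => hHker q hq
    let ψbar := QuotientAddGroup.lift H.toAddSubgroup ψ hle
    have hre : Set.range ψ = Set.range ψbar := by
      ext y
      constructor
      · rintro ⟨x, rfl⟩
        exact ⟨QuotientAddGroup.mk x, rfl⟩
      · rintro ⟨x, rfl⟩
        obtain ⟨z, rfl⟩ := QuotientAddGroup.mk_surjective x
        exact ⟨z, rfl⟩
    rw [hre]
    exact Set.finite_range _
  refine ⟨⟨ψ, hψc, hfac⟩, ?_⟩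
  have hsub : Set.range χ ⊆ (fun y => m • y) ⁻¹' (Set.range ψ) := by
    rintro _ ⟨x, rfl⟩
    exact ⟨g x, hfac x⟩
  exact (aux_preimage m hm hψrange).subset hsub
end
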